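/- Let C ⊆ ℝ^r be a rational polyhedral cone with C ∩ (−C) = {0} (a pointed cone). Then there exists a ℤ-basis {y₁,…,y_r} of the dual lattice (ℤ^r)* all of whose elements are nonnegative on C, i.e., the dual cone C* contains a lattice basis of (ℤ^r)*. -/

import Mathlib

open scoped NNReal
noncomputable section

/-- Real image of an integer vector. -/
def toR {r : ℕ} (v : Fin r → ℤ) : Fin r → ℝ := fun i => (v i : ℝ)

/-- The group of differences of a submonoid of an abelian group. -/
def gp {G : Type*} [AddCommGroup G] (M : AddSubmonoid G) : AddSubgroup G :=
  AddSubgroup.closure (M : Set G)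

/-- `M` is normal: `c • x ∈ M` for `x ∈ gp M`, `c ≥ 1` implies `x ∈ M`. -/
def IsNormalMonoid {G : Type*} [AddCommGroup G] (M : AddSubmonoid G) : Prop :=
  ∀ (c : ℕ) (x : G), 0 < c → x ∈ gp M → (c : ℤ) • x ∈ M → x ∈ M

/-- `M` is positive: no nontrivial units. -/
def IsPositiveMonoid {G : Type*} [AddCommGroup G] (M : AddSubmonoid G) : Prop :=
  ∀ x ∈ M, -x ∈ M → x = 0

/-- The cone `ℝ₊M ⊆ ℝ^r` spanned by a submonoid `M ⊆ ℤ^r`. -/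
def coneM {r : ℕ} (M : AddSubmonoid (Fin r → ℤ)) : Set (Fin r → ℝ) :=
  (Submodule.span ℝ≥0 (toR '' (M : Set (Fin r → ℤ))) : Submodule ℝ≥0 (Fin r → ℝ))

/-- The distinguished vector `e = (1,0) ∈ ℤ ⊕ ℤ^r`. -/
def eVec (r : ℕ) : ℤ × (Fin r → ℤ) := (1, 0)

/-- `M_i = (ℝ ⊕ ℝ₊M) ∩ (ℤ(x₁ - ie) + ⋯ + ℤ(x_r - ie))`, with `x_j - ie = (-i, x_j)`. -/
def Mi {r : ℕ} (M : AddSubmonoid (Fin r → ℤ)) (x : Fin r → (Fin r → ℤ)) (i : ℕ) :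
    Set (ℤ × (Fin r → ℤ)) :=
  {p | p ∈ AddSubgroup.closure (Set.range fun j => ((-(i : ℤ), x j) : ℤ × (Fin r → ℤ))) ∧
       toR p.2 ∈ coneM M}

/-- The submonoid (as a set) `ℤ₊e + M_i`. -/
def ZeMi {r : ℕ} (M : AddSubmonoid (Fin r → ℤ)) (x : Fin r → (Fin r → ℤ)) (i : ℕ) :
    Set (ℤ × (Fin r → ℤ)) :=
  {p | ∃ (z : ℕ) (m : ℤ × (Fin r → ℤ)), m ∈ Mi M x i ∧ p = (z : ℤ) • eVec r + m}
section AuxLemmas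


theorem exists_int_dual_pos {r m : ℕ} (v : Fin m → (Fin r → ℚ))
    (hpointed : ∀ x ∈ (Submodule.span ℝ≥0
        (Set.range fun j => fun i => ((v j i : ℝ))) : Set (Fin r → ℝ)),
      -x ∈ (Submodule.span ℝ≥0
        (Set.range fun j => fun i => ((v j i : ℝ))) : Set (Fin r → ℝ)) → x = 0) :
    ∃ y : Fin r → ℤ, ∀ j, v j ≠ 0 → 0 < ∑ i, (y i : ℚ) * v j i := by
  classical
  set vR : Fin m → (Fin r → ℝ) := fun j => fun i => ((v j i : ℝ)) with hvR
  set P : Submodule ℝ≥0 (Fin r → ℝ) := Submodule.span ℝ≥0 (Set.range vR) with hP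
  have hvR_ne : ∀ j, v j ≠ 0 → vR j ≠ 0 := by
    intro j hj h
    apply hj
    funext i
    have := congrFun h i
    simpa [hvR] using this
  have hsmul_mem : ∀ (c : ℝ) (x : Fin r → ℝ), 0 ≤ c → x ∈ P → c • x ∈ P := by
    intro c x hc hx
    have : (⟨c, hc⟩ : ℝ≥0) • x ∈ P := P.smul_mem _ hx
    simpa [NNReal.smul_def] using this
  set S : Set (Fin r → ℝ) := vR '' {j | v j ≠ 0} with hS
  have hSfin : S.Finite := (Set.toFinite _).image _
  -- 0 is not in the convex hull of S
  have h0 : (0 : Fin r → ℝ) ∉ convexHull ℝ S := by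
    intro h0
    rw [convexHull_eq] at h0
    obtain ⟨ι, t, w, z, hw0, hw1, hzS, hcm⟩ := h0
    rw [Finset.centerMass_eq_of_sum_1 _ _ hw1] at hcm
    have hex : ∃ i0 ∈ t, 0 < w i0 := by
      by_contra hcon
      push_neg at hcon
      have : ∑ i ∈ t, w i = 0 :=
        Finset.sum_eq_zero fun i hi => le_antisymm (hcon i hi) (hw0 i hi)
      rw [hw1] at this
      norm_num at this
    obtain ⟨i0, hi0t, hwi0⟩ := hex
    have hzP : ∀ i ∈ t, z i ∈ P := by
      intro i hi
      obtain ⟨j, _, hj⟩ := hzS i hi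
      exact hj ▸ Submodule.subset_span ⟨j, rfl⟩
    set x : Fin r → ℝ := w i0 • z i0 with hx
    have hxP : x ∈ P := hsmul_mem _ _ (hwi0.le) (hzP i0 hi0t)
    have hnegP : -x ∈ P := by
      have hsplit : x + ∑ i ∈ t.erase i0, w i • z i = 0 := by
        have h' := Finset.add_sum_erase t (fun i => w i • z i) hi0t
        rw [hx, h']
        exact hcm
      have : -x = ∑ i ∈ t.erase i0, w i • z i := neg_eq_of_add_eq_zero_right hsplit
      rw [this]
      exact Submodule.sum_mem P fun i hi =>
        hsmul_mem _ _ (hw0 i (Finset.mem_of_mem_erase hi)) (hzP i (Finset.mem_of_mem_erase hi))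
    have hxne : x ≠ 0 := by
      obtain ⟨j, hjmem, hj⟩ := hzS i0 hi0t
      refine smul_ne_zero hwi0.ne' ?_
      rw [← hj]
      exact hvR_ne j hjmem
    exact hxne (hpointed x hxP hnegP)
  -- separate 0 from the hull
  obtain ⟨φ, u, hφ0, hφS⟩ :=
    geometric_hahn_banach_point_closed (convex_convexHull ℝ S)
      (hSfin.isCompact_convexHull (𝕜 := ℝ)).isClosed h0
  have hu : 0 < u := by simpa using hφ0
  set wv : Fin r → ℝ := fun i => φ (Pi.single i 1) with hwv
  have hφeq : ∀ x : Fin r → ℝ, φ x = ∑ i, x i * wv i := by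
    intro x
    have hx : x = ∑ i, x i • (Pi.single i (1 : ℝ) : Fin r → ℝ) := by
      funext k
      simp [Pi.single_apply, Finset.sum_ite_eq', mul_comm]
    conv_lhs => rw [hx]
    rw [map_sum]
    exact Finset.sum_congr rfl fun i _ => by rw [map_smul]; simp [hwv, smul_eq_mul]
  set T : ℝ := ∑ j, ∑ i, |vR j i| with hT
  have hT0 : 0 ≤ T := Finset.sum_nonneg fun j _ =>
    Finset.sum_nonneg fun i _ => abs_nonneg _
  set ε : ℝ := u / (T + 1) with hε
  have hεpos : 0 < ε := div_pos hu (by linarith)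
  -- choose rational approximations
  have hq : ∀ i : Fin r, ∃ q : ℚ, wv i < (q : ℝ) ∧ (q : ℝ) < wv i + ε :=
    fun i => exists_rat_btwn (lt_add_of_pos_right _ hεpos)
  choose q hq1 hq2 using hq
  have hqpos : ∀ j, v j ≠ 0 → 0 < ∑ i, (q i : ℝ) * vR j i := by
    intro j hj
    have hjS : vR j ∈ convexHull ℝ S :=
      subset_convexHull ℝ S ⟨j, hj, rfl⟩
    have hφj : u < ∑ i, vR j i * wv i := by
      rw [← hφeq]; exact hφS _ hjS
    have hrow : ∑ i, |vR j i| ≤ T := by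
      rw [hT]
      exact Finset.single_le_sum (f := fun j => ∑ i, |vR j i|)
        (fun j _ => Finset.sum_nonneg fun i _ => abs_nonneg _) (Finset.mem_univ j)
    have hdiff : |∑ i, ((q i : ℝ) - wv i) * vR j i| < u := by
      calc |∑ i, ((q i : ℝ) - wv i) * vR j i|
          ≤ ∑ i, |((q i : ℝ) - wv i) * vR j i| := Finset.abs_sum_le_sum_abs _ _
        _ ≤ ∑ i, ε * |vR j i| := by
            refine Finset.sum_le_sum fun i _ => ?_
            rw [abs_mul]
            refine mul_le_mul_of_nonneg_right ?_ (abs_nonneg _)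
            rw [abs_of_pos (by linarith [hq1 i])]
            linarith [hq2 i]
        _ = ε * ∑ i, |vR j i| := by rw [Finset.mul_sum]
        _ ≤ ε * T := mul_le_mul_of_nonneg_left hrow hεpos.le
        _ < ε * (T + 1) := by nlinarith
        _ = u := by rw [hε]; field_simp
    have hsum : ∑ i, (q i : ℝ) * vR j i
        = (∑ i, vR j i * wv i) + ∑ i, ((q i : ℝ) - wv i) * vR j i := by
      rw [← Finset.sum_add_distrib]
      exact Finset.sum_congr rfl fun i _ => by ring
    rw [hsum]
    have := abs_lt.1 hdiff
    linarith [this.1]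
  -- clear denominators
  set d : ℕ := ∏ i, (q i).den with hd
  have hdpos : 0 < d := Finset.prod_pos fun i _ => (q i).pos
  refine ⟨fun i => (q i).num * ((d / (q i).den : ℕ) : ℤ), ?_⟩
  intro j hj
  have hcast : ∀ i, (((q i).num * ((d / (q i).den : ℕ) : ℤ) : ℤ) : ℚ) = q i * d := by
    intro i
    obtain ⟨k, hk⟩ : (q i).den ∣ d := Finset.dvd_prod_of_mem _ (Finset.mem_univ i)
    have hden : ((q i).den : ℚ) ≠ 0 := by exact_mod_cast (q i).pos.ne'
    have hdk : d / (q i).den = k := by rw [hk]; exact Nat.mul_div_cancel_left k (q i).pos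
    rw [hdk, hk]
    have hnum : ((q i).num : ℚ) = q i * (q i).den := by
      have h' := Rat.num_div_den (q i)
      rw [div_eq_iff hden] at h'
      exact h'
    push_cast
    rw [hnum]
    ring
  have hQ : 0 < ∑ i, (q i) * v j i := by
    have : ((∑ i, (q i) * v j i : ℚ) : ℝ) = ∑ i, (q i : ℝ) * vR j i := by
      push_cast [hvR]; rfl
    have h := hqpos j hj
    rw [← this] at h
    exact_mod_cast h
  calc (0 : ℚ) < d * ∑ i, (q i) * v j i := by positivity
    _ = ∑ i, ((((q i).num * ((d / (q i).den : ℕ) : ℤ) : ℤ) : ℚ)) * v j i := by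
        rw [Finset.mul_sum]
        exact Finset.sum_congr rfl fun i _ => by rw [hcast i]; ring

/-- Any nonzero integer vector is a positive multiple of the first element of some basis. -/
theorem exists_basis_smul {r : ℕ} [NeZero r] (y : Fin r → ℤ) (hy : y ≠ 0) :
    ∃ (B : Module.Basis (Fin r) ℤ (Fin r → ℤ)) (g : ℤ), 0 < g ∧ y = g • B 0 := by
  classical
  obtain ⟨n, snf⟩ := (Submodule.span ℤ {y}).smithNormalForm (Pi.basisFun ℤ (Fin r))
  obtain ⟨bM, bN, f, a, hsnf⟩ := snf
  -- n = 1
  have e1 : ℤ ≃ₗ[ℤ] (Submodule.span ℤ {y} : Submodule ℤ (Fin r → ℤ)) :=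
    LinearEquiv.toSpanNonzeroSingleton ℤ _ y hy
  have hn : n = 1 := by
    have h1 : Module.finrank ℤ (Submodule.span ℤ {y} : Submodule ℤ (Fin r → ℤ)) = n := by
      simpa using Module.finrank_eq_card_basis bN
    have h2 : Module.finrank ℤ (Submodule.span ℤ {y} : Submodule ℤ (Fin r → ℤ)) = 1 := by
      rw [← e1.finrank_eq]; simp
    omega
  subst hn
  set yN : (Submodule.span ℤ {y} : Submodule ℤ (Fin r → ℤ)) :=
    ⟨y, Submodule.mem_span_singleton_self y⟩ with hyN
  have hrepr : yN = bN.repr yN 0 • bN 0 := by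
    conv_lhs => rw [← bN.sum_repr yN]
    simp [Fin.sum_univ_one]
  have hyM : y = (bN.repr yN 0 * a 0) • bM (f 0) := by
    have h3 : y = bN.repr yN 0 • ((bN 0 : Fin r → ℤ)) := by
      conv_lhs => rw [show y = (yN : Fin r → ℤ) from rfl, hrepr]
      rw [Submodule.coe_smul]
    rw [hsnf 0, smul_smul] at h3
    exact h3
  set g0 : ℤ := bN.repr yN 0 * a 0 with hg0
  have hg0ne : g0 ≠ 0 := by
    rintro h; rw [h, zero_smul] at hyM; exact hy hyM
  -- bring index to 0
  set B0 : Module.Basis (Fin r) ℤ (Fin r → ℤ) := bM.reindex (Equiv.swap (f 0) 0) with hB0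
  have hB00 : B0 0 = bM (f 0) := by
    rw [hB0, Module.Basis.reindex_apply, Equiv.symm_swap, Equiv.swap_apply_right]
  rcases lt_or_gt_of_ne hg0ne with hneg | hpos
  · refine ⟨B0.unitsSMul (fun i => if i = 0 then -1 else 1), -g0, by omega, ?_⟩
    rw [Module.Basis.unitsSMul_apply, if_pos rfl, hB00, hyM]
    simp [smul_smul]
  · exact ⟨B0, g0, hpos, by rw [hB00]; exact hyM⟩

theorem exists_basis_shift {r : ℕ} [NeZero r] (B : Module.Basis (Fin r) ℤ (Fin r → ℤ)) (K : ℤ) :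
    ∃ b : Module.Basis (Fin r) ℤ (Fin r → ℤ),
      b 0 = B 0 ∧ ∀ j : Fin r, j ≠ 0 → b j = B j + K • B 0 := by
  classical
  set s : (Fin r → ℤ) →ₗ[ℤ] ℤ := ∑ j ∈ Finset.univ.erase 0, B.coord j with hs
  have hsB : ∀ j : Fin r, s (B j) = if j = 0 then 0 else 1 := by
    intro j
    rw [hs]
    simp only [LinearMap.coe_sum, Finset.sum_apply, Module.Basis.coord_apply, Module.Basis.repr_self]
    rw [Finset.sum_congr rfl (fun x _ => Finsupp.single_apply)]
    by_cases hj : j = 0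
    · subst hj
      rw [if_pos rfl, Finset.sum_eq_zero]
      intro x hx
      rw [if_neg]
      exact fun h => (Finset.mem_erase.1 hx).1 h.symm
    · rw [if_neg hj, Finset.sum_eq_single j]
      · simp
      · intro x _ hxj; rw [if_neg (fun h => hxj h.symm)]
      · intro h; exact absurd (Finset.mem_erase.2 ⟨hj, Finset.mem_univ j⟩) h
  set T : (Fin r → ℤ) →ₗ[ℤ] (Fin r → ℤ) :=
    (LinearMap.toSpanSingleton ℤ (Fin r → ℤ) (K • B 0)).comp s with hT
  have hTapp : ∀ x, T x = s x • (K • B 0) := fun x => rfl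
  have hTT : ∀ x, T (T x) = 0 := by
    intro x
    rw [hTapp, hTapp]
    have : s (s x • K • B 0) = 0 := by
      rw [map_smul, map_smul, hsB 0, if_pos rfl]; simp
    rw [this, zero_smul]
  set f : (Fin r → ℤ) →ₗ[ℤ] (Fin r → ℤ) := LinearMap.id + T with hf
  set g : (Fin r → ℤ) →ₗ[ℤ] (Fin r → ℤ) := LinearMap.id - T with hg
  have hfapp : ∀ x, f x = x + T x := fun x => rfl
  have hgapp : ∀ x, g x = x - T x := fun x => rfl
  have h1 : f.comp g = LinearMap.id := by
    apply LinearMap.ext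
    intro x
    rw [LinearMap.comp_apply, hgapp, hfapp, map_sub, hTT, LinearMap.id_apply]
    abel
  have h2 : g.comp f = LinearMap.id := by
    apply LinearMap.ext
    intro x
    rw [LinearMap.comp_apply, hfapp, hgapp, map_add, hTT, LinearMap.id_apply]
    abel
  set e : (Fin r → ℤ) ≃ₗ[ℤ] (Fin r → ℤ) := LinearEquiv.ofLinear f g h1 h2 with he
  have heapp : ∀ x, e x = x + T x := fun x => rfl
  refine ⟨B.map e, ?_, ?_⟩
  · rw [Module.Basis.map_apply, heapp, hTapp, hsB 0, if_pos rfl, zero_smul, add_zero]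
  · intro j hj
    rw [Module.Basis.map_apply, heapp, hTapp, hsB j, if_neg hj, one_smul]


end AuxLemmas

/-- a pointed rational polyhedral cone in ℝ^r admits a ℤ-basis of the dual
lattice (identified with ℤ^r via the standard dot product) all of whose members are
nonnegative on the cone. -/
theorem statement1 {r : ℕ} (C : Set (Fin r → ℝ))
    (hrat : ∃ (m : ℕ) (v : Fin m → (Fin r → ℚ)),
      C = (Submodule.span ℝ≥0 (Set.range fun j => fun i => ((v j i : ℝ))) : Set (Fin r → ℝ)))
    (hpointed : ∀ x ∈ C, -x ∈ C → x = 0) :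
    ∃ b : Module.Basis (Fin r) ℤ (Fin r → ℤ),
      ∀ j : Fin r, ∀ x ∈ C, 0 ≤ ∑ i, (b j i : ℝ) * x i := by
  classical
  obtain ⟨m, v, rfl⟩ := hrat
  by_cases hall : ∀ j, v j = 0
  · -- degenerate case: the cone is {0}
    refine ⟨Pi.basisFun ℤ (Fin r), ?_⟩
    intro j x hx
    have hx0 : x = 0 := by
      have hsub : (Set.range fun j => fun i => ((v j i : ℝ))) ⊆ {0} := by
        rintro _ ⟨j, rfl⟩
        have : (fun i => ((v j i : ℝ))) = 0 := by
          funext i; rw [hall j]; simp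
        simp [this]
      have hle := Submodule.span_mono (R := ℝ≥0) hsub
      rw [Submodule.span_zero_singleton] at hle
      have := hle hx
      simpa using this
    simp [hx0]
  · push_neg at hall
    obtain ⟨j0, hj0⟩ := hall
    have hr : r ≠ 0 := by
      rintro rfl
      exact hj0 (funext fun i => i.elim0)
    haveI : NeZero r := ⟨hr⟩
    obtain ⟨y, hy⟩ := exists_int_dual_pos v hpointed
    have hyne : y ≠ 0 := by
      rintro rfl
      have := hy j0 hj0
      simp at this
    obtain ⟨B, g, hg, hyg⟩ := exists_basis_smul y hyne
    -- positivity of B 0 against the generators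
    have hy' : ∀ l, v l ≠ 0 → 0 < ∑ i, (B 0 i : ℚ) * v l i := by
      intro l hl
      have h1 := hy l hl
      have h2 : ∑ i, (y i : ℚ) * v l i = (g : ℚ) * ∑ i, (B 0 i : ℚ) * v l i := by
        rw [Finset.mul_sum]
        refine Finset.sum_congr rfl fun i _ => ?_
        have : y i = g * B 0 i := by
          have := congrFun hyg i
          simpa using this
        rw [this]; push_cast; ring
      rw [h2] at h1
      have hgQ : (0 : ℚ) < (g : ℚ) := by exact_mod_cast hg
      nlinarith
    -- choose the shift constant K
    have hKex : ∀ p : Fin r × Fin m, ∃ K : ℕ, v p.2 ≠ 0 →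
        0 ≤ (K : ℚ) * (∑ i, (B 0 i : ℚ) * v p.2 i) + ∑ i, (B p.1 i : ℚ) * v p.2 i := by
      intro p
      by_cases hp : v p.2 = 0
      · exact ⟨0, fun h => absurd hp h⟩
      · set s0 := ∑ i, (B 0 i : ℚ) * v p.2 i with hs0
        set s1 := ∑ i, (B p.1 i : ℚ) * v p.2 i with hs1
        have hpos := hy' p.2 hp
        obtain ⟨n, hn⟩ := exists_nat_ge ((-s1) / s0)
        refine ⟨n, fun _ => ?_⟩
        rw [div_le_iff₀ hpos] at hn
        linarith
    choose Kf hKf using hKex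
    set K : ℕ := Finset.univ.sup Kf with hK
    obtain ⟨b, hb0, hbj⟩ := exists_basis_shift B (K : ℤ)
    refine ⟨b, ?_⟩
    have key : ∀ (j : Fin r) (l : Fin m), 0 ≤ ∑ i, (b j i : ℚ) * v l i := by
      intro j l
      by_cases hl : v l = 0
      · refine le_of_eq (Finset.sum_eq_zero fun i _ => ?_).symm
        rw [show v l i = 0 from congrFun hl i]; ring
      · by_cases hj : j = 0
        · subst hj
          rw [hb0]
          exact (hy' l hl).le
        · have hbji : ∀ i, b j i = B j i + (K : ℤ) * B 0 i := by
            intro i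
            have := congrFun (hbj j hj) i
            simpa using this
          have hKle : Kf (j, l) ≤ K := Finset.le_sup (Finset.mem_univ (j, l))
          have h1 := hKf (j, l) hl
          have hpos := hy' l hl
          have hsum : ∑ i, (b j i : ℚ) * v l i
              = (K : ℚ) * (∑ i, (B 0 i : ℚ) * v l i) + ∑ i, (B j i : ℚ) * v l i := by
            rw [Finset.mul_sum, ← Finset.sum_add_distrib]
            refine Finset.sum_congr rfl fun i _ => ?_
            rw [hbji i]; push_cast; ring
          rw [hsum]
          have hmono : (Kf (j, l) : ℚ) * (∑ i, (B 0 i : ℚ) * v l i)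
              ≤ (K : ℚ) * (∑ i, (B 0 i : ℚ) * v l i) := by
            have : (Kf (j, l) : ℚ) ≤ (K : ℚ) := by exact_mod_cast hKle
            exact mul_le_mul_of_nonneg_right this hpos.le
          simp only at h1
          linarith
    intro j x hx
    rw [SetLike.mem_coe, Submodule.mem_span_range_iff_exists_fun] at hx
    obtain ⟨c, hc⟩ := hx
    have hxi : ∀ i, x i = ∑ l, (c l : ℝ) * (v l i : ℝ) := by
      intro i
      rw [← hc]
      simp [NNReal.smul_def]
    calc (0 : ℝ) ≤ ∑ l, (c l : ℝ) * ∑ i, (b j i : ℝ) * (v l i : ℝ) := by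
          refine Finset.sum_nonneg fun l _ => mul_nonneg (c l).coe_nonneg ?_
          have : ((∑ i, (b j i : ℚ) * v l i : ℚ) : ℝ) = ∑ i, (b j i : ℝ) * (v l i : ℝ) := by
            push_cast; rfl
          rw [← this]
          exact_mod_cast key j l
      _ = ∑ i, (b j i : ℝ) * x i := by
          simp_rw [hxi, Finset.mul_sum]
          rw [Finset.sum_comm]
          exact Finset.sum_congr rfl fun i _ => Finset.sum_congr rfl fun l _ => by ring
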